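/- Fix α ∈ (0, π) and x ∈ (0, π), and define g(s,u) := sin(x)·sin((s−α)/2)·sin((s+α)/2) / ( sin²((u−x)/2)·sin²((s+α)/2) + sin²((u+x)/2)·sin²((s−α)/2) ) on [0,2π]² minus the singular points ±(α, x). Then for every 0 ≤ η < 1, the function |g|^{1+η} is integrable on [0,2π]². -/

import Mathlib

set_option maxHeartbeats 1600000

open Real MeasureTheory

noncomputable def gfun (α x s u : ℝ) : ℝ :=
  Real.sin x * Real.sin ((s - α) / 2) * Real.sin ((s + α) / 2) /
    (Real.sin ((u - x) / 2) ^ 2 * Real.sin ((s + α) / 2) ^ 2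
      + Real.sin ((u + x) / 2) ^ 2 * Real.sin ((s - α) / 2) ^ 2)

/-- chord bound for sin via concavity -/
lemma gfun_chord {β θ : ℝ} (hβ0 : 0 < β) (hβπ : β < π) (h0 : 0 ≤ θ)
    (h1 : θ ≤ π - β / 2) : Real.sin (β / 2) / π * θ ≤ Real.sin θ := by
  have hπ := Real.pi_pos
  set T : ℝ := π - β / 2 with hT
  have hT0 : 0 < T := by simp only [hT]; linarith
  have hcc := strictConcaveOn_sin_Icc.concaveOn
  have h0m : (0 : ℝ) ∈ Set.Icc (0:ℝ) π := by constructor <;> [rfl; positivity]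
  have hTm : T ∈ Set.Icc (0:ℝ) π := by
    constructor
    · exact hT0.le
    · simp only [hT]; linarith
  have hab : (1 - θ / T) + θ / T = 1 := by ring
  have ha : 0 ≤ 1 - θ / T := by
    have : θ / T ≤ 1 := by
      rw [div_le_one hT0]; exact h1
    linarith
  have hb : 0 ≤ θ / T := by positivity
  have key := hcc.2 h0m hTm ha hb hab
  simp only [smul_eq_mul, mul_zero, Real.sin_zero, zero_add] at key
  have hθT : (1 - θ / T) * 0 + θ / T * T = θ := by
    field_simp
    ring
  rw [show θ / T * T = θ from div_mul_cancel₀ θ (ne_of_gt hT0)] at key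
  have hsinT : Real.sin T = Real.sin (β / 2) := by
    rw [hT, Real.sin_pi_sub]
  rw [hsinT] at key
  -- key : θ / T * sin (β/2) ≤ sin θ
  have hs : 0 ≤ Real.sin (β / 2) := by
    apply Real.sin_nonneg_of_nonneg_of_le_pi <;> nlinarith
  have hTπ : T ≤ π := by rw [hT]; linarith
  have h2 : Real.sin (β / 2) / π * θ ≤ θ / T * Real.sin (β / 2) := by
    rw [div_mul_eq_mul_div, div_mul_eq_mul_div, div_le_div_iff₀ hπ hT0]
    nlinarith [mul_nonneg (mul_nonneg hs h0) (sub_nonneg.mpr hTπ)]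
  exact h2.trans key

/-- lower bound |sin(t/2)| ≥ c |t| -/
lemma gfun_sin_half_lb {β t : ℝ} (hβ0 : 0 < β) (hβπ : β < π)
    (ht : |t| ≤ 2 * π - β) :
    Real.sin (β / 2) / π * (|t| / 2) ≤ |Real.sin (t / 2)| := by
  have hπ := Real.pi_pos
  have habs : |Real.sin (t / 2)| = Real.sin (|t| / 2) := by
    rcases le_or_gt 0 t with h | h
    · rw [abs_of_nonneg h, abs_of_nonneg]
      apply Real.sin_nonneg_of_nonneg_of_le_pi
      · positivity
      · rw [abs_of_nonneg h] at ht; linarith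
    · have ht' : -t ≤ 2 * π - β := by rw [abs_of_neg h] at ht; exact ht
      rw [abs_of_neg h]
      have h1 : Real.sin (t / 2) = -Real.sin (-t / 2) := by
        rw [neg_div, Real.sin_neg, neg_neg]
      rw [h1, abs_neg, abs_of_nonneg]
      exact Real.sin_nonneg_of_nonneg_of_le_pi (by linarith) (by linarith)
  rw [habs]
  exact gfun_chord hβ0 hβπ (by positivity) (by linarith)

/-- 1d integrability of |t - c|^e for e > -1 -/
lemma gfun_int1d {e : ℝ} (he : -1 < e) (c A B : ℝ) :
    IntegrableOn (fun t : ℝ => |t - c| ^ e) (Set.Icc A B) := by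
  have base : ∀ a b : ℝ, IntervalIntegrable (fun t : ℝ => |t| ^ e) volume a b := by
    have h0 : ∀ b : ℝ, 0 ≤ b → IntervalIntegrable (fun t : ℝ => |t| ^ e) volume 0 b := by
      intro b hb
      have h := intervalIntegral.intervalIntegrable_rpow' (a := 0) (b := b) he
      rw [intervalIntegrable_iff_integrableOn_Ioc_of_le hb] at h ⊢
      apply h.congr_fun ?_ measurableSet_Ioc
      intro t ht
      simp [abs_of_pos ht.1]
    have h1 : ∀ b : ℝ, IntervalIntegrable (fun t : ℝ => |t| ^ e) volume 0 b := by
      intro b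
      rcases le_or_gt 0 b with hb | hb
      · exact h0 b hb
      · have := h0 (-b) (by linarith)
        rw [IntervalIntegrable.iff_comp_neg] at this
        simpa using this
    intro a b
    exact (h1 a).symm.trans (h1 b)
  rcases le_or_gt A B with hAB | hAB
  · have h := (base (A - c) (B - c)).comp_sub_right c
    simp only [sub_add_cancel] at h
    rw [intervalIntegrable_iff_integrableOn_Icc_of_le hAB] at h
    exact h
  · rw [Set.Icc_eq_empty (by linarith)]
    exact integrableOn_empty


set_option maxHeartbeats 4000000 in
/-- core polynomial inequality -/
lemma gfun_core {a b c d δ m A1 A2 B1 B2 sx : ℝ}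
    (hδ : 0 < δ) (hδ1 : δ ≤ 1) (hm : 0 < m)
    (ha1 : |a| ≤ 1) (hb1 : |b| ≤ 1) (hc1 : |c| ≤ 1) (hd1 : |d| ≤ 1)
    (hab : δ ≤ |a| ∨ δ ≤ |b|) (hcd : δ ≤ |c| ∨ δ ≤ |d|)
    (hA1 : 0 ≤ A1) (hA2 : 0 ≤ A2) (hB1 : 0 ≤ B1) (hB2 : 0 ≤ B2)
    (hla : m / 2 * A1 ≤ |a|) (hlb : m / 2 * A2 ≤ |b|)
    (hlc : m / 2 * B1 ≤ |c|) (hld : m / 2 * B2 ≤ |d|)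
    (hsx : 0 ≤ sx) (hsx1 : sx ≤ 1) :
    (δ ^ 4 / 2) ^ 2 * m ^ 2 * ((sx * a * b) ^ 2 * min (A1 * B1) (A2 * B2))
      ≤ 2 * (c ^ 2 * b ^ 2 + d ^ 2 * a ^ 2) ^ 2 := by
  have ha2 : a ^ 2 ≤ 1 := by nlinarith [sq_abs a, abs_nonneg a]
  have hb2 : b ^ 2 ≤ 1 := by nlinarith [sq_abs b, abs_nonneg b]
  have hc2 : c ^ 2 ≤ 1 := by nlinarith [sq_abs c, abs_nonneg c]
  have hd2 : d ^ 2 ≤ 1 := by nlinarith [sq_abs d, abs_nonneg d]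
  have hmin0 : (0:ℝ) ≤ min (a ^ 2 + c ^ 2) (b ^ 2 + d ^ 2) :=
    le_min (by positivity) (by positivity)
  have hminP : min (a ^ 2 + c ^ 2) (b ^ 2 + d ^ 2) ≤ a ^ 2 + c ^ 2 := min_le_left _ _
  have hminQ : min (a ^ 2 + c ^ 2) (b ^ 2 + d ^ 2) ≤ b ^ 2 + d ^ 2 := min_le_right _ _
  have hδ2 : δ ^ 2 ≤ 1 := by nlinarith
  have hκδ : δ ^ 4 / 2 ≤ δ ^ 2 := by
    nlinarith [mul_nonneg (sq_nonneg δ) (sub_nonneg.mpr hδ2)]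
  have hmin2 : min (a ^ 2 + c ^ 2) (b ^ 2 + d ^ 2) ≤ 2 := by linarith
  -- key1 : denominator lower bound
  have key1 : δ ^ 4 / 2 * min (a ^ 2 + c ^ 2) (b ^ 2 + d ^ 2)
      ≤ c ^ 2 * b ^ 2 + d ^ 2 * a ^ 2 := by
    rcases hab with ha | hb <;> rcases hcd with hc | hd
    · have h1 : δ ^ 2 ≤ a ^ 2 := by nlinarith [sq_abs a]
      have h2 : δ ^ 2 ≤ c ^ 2 := by nlinarith [sq_abs c]
      have hQ : δ ^ 2 * (b ^ 2 + d ^ 2) ≤ c ^ 2 * b ^ 2 + d ^ 2 * a ^ 2 := by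
        nlinarith [sq_nonneg b, sq_nonneg d]
      nlinarith [sq_nonneg b, sq_nonneg d, mul_le_mul_of_nonneg_right hκδ hmin0]
    · have h1 : δ ^ 2 ≤ a ^ 2 := by nlinarith [sq_abs a]
      have h2 : δ ^ 2 ≤ d ^ 2 := by nlinarith [sq_abs d]
      have hD4 : δ ^ 4 ≤ c ^ 2 * b ^ 2 + d ^ 2 * a ^ 2 := by
        nlinarith [sq_nonneg c, sq_nonneg b, sq_nonneg δ, mul_nonneg (sq_nonneg c) (sq_nonneg b),
          mul_le_mul h2 h1 (sq_nonneg δ) (sq_nonneg d)]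
      nlinarith [sq_nonneg δ, mul_nonneg (sq_nonneg δ) (sq_nonneg δ)]
    · have h1 : δ ^ 2 ≤ b ^ 2 := by nlinarith [sq_abs b]
      have h2 : δ ^ 2 ≤ c ^ 2 := by nlinarith [sq_abs c]
      have hD4 : δ ^ 4 ≤ c ^ 2 * b ^ 2 + d ^ 2 * a ^ 2 := by
        nlinarith [sq_nonneg d, sq_nonneg a, sq_nonneg δ, mul_nonneg (sq_nonneg d) (sq_nonneg a),
          mul_le_mul h2 h1 (sq_nonneg δ) (sq_nonneg c)]
      nlinarith [sq_nonneg δ, mul_nonneg (sq_nonneg δ) (sq_nonneg δ)]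
    · have h1 : δ ^ 2 ≤ b ^ 2 := by nlinarith [sq_abs b]
      have h2 : δ ^ 2 ≤ d ^ 2 := by nlinarith [sq_abs d]
      have hP : δ ^ 2 * (a ^ 2 + c ^ 2) ≤ c ^ 2 * b ^ 2 + d ^ 2 * a ^ 2 := by
        nlinarith [sq_nonneg a, sq_nonneg c]
      nlinarith [sq_nonneg a, sq_nonneg c, mul_le_mul_of_nonneg_right hκδ hmin0]
  -- key2 : numerator bound
  have key2 : (sx * a * b) ^ 2 ≤ min (a ^ 2 + c ^ 2) (b ^ 2 + d ^ 2) := by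
    have hsx2 : sx ^ 2 ≤ 1 := by nlinarith
    apply le_min
    · have h2 : sx ^ 2 * b ^ 2 ≤ 1 := by
        linarith [mul_nonneg (sub_nonneg.mpr hsx2) (sq_nonneg b), hb2]
      have h3 := mul_le_mul_of_nonneg_right h2 (sq_nonneg a)
      linarith [sq_nonneg c, h3]
    · have h2 : sx ^ 2 * a ^ 2 ≤ 1 := by
        linarith [mul_nonneg (sub_nonneg.mpr hsx2) (sq_nonneg a), ha2]
      have h3 := mul_le_mul_of_nonneg_right h2 (sq_nonneg b)
      linarith [sq_nonneg d, h3]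
  -- key3 : min of products bound
  have key3 : m ^ 2 / 2 * min (A1 * B1) (A2 * B2)
      ≤ min (a ^ 2 + c ^ 2) (b ^ 2 + d ^ 2) := by
    have hPl : m ^ 2 / 2 * (A1 * B1) ≤ a ^ 2 + c ^ 2 := by
      have h2ac : 2 * (|a| * |c|) ≤ a ^ 2 + c ^ 2 := by
        nlinarith [sq_nonneg (|a| - |c|), sq_abs a, sq_abs c]
      have hm1 := mul_le_mul hla hlc (by positivity) (abs_nonneg a)
      linarith [h2ac, hm1]
    have hQl : m ^ 2 / 2 * (A2 * B2) ≤ b ^ 2 + d ^ 2 := by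
      have h2bd : 2 * (|b| * |d|) ≤ b ^ 2 + d ^ 2 := by
        nlinarith [sq_nonneg (|b| - |d|), sq_abs b, sq_abs d]
      have hm1 := mul_le_mul hlb hld (by positivity) (abs_nonneg b)
      linarith [h2bd, hm1]
    apply le_min
    · exact le_trans (mul_le_mul_of_nonneg_left (min_le_left _ _) (by positivity)) hPl
    · exact le_trans (mul_le_mul_of_nonneg_left (min_le_right _ _) (by positivity)) hQl
  -- combine
  set MPQ : ℝ := min (a ^ 2 + c ^ 2) (b ^ 2 + d ^ 2) with hMPQ
  set M : ℝ := min (A1 * B1) (A2 * B2) with hM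
  have hM0 : (0:ℝ) ≤ M := le_min (mul_nonneg hA1 hB1) (mul_nonneg hA2 hB2)
  have hD0 : (0:ℝ) ≤ c ^ 2 * b ^ 2 + d ^ 2 * a ^ 2 := by positivity
  have hκ0 : (0:ℝ) ≤ δ ^ 4 / 2 := by positivity
  have s1 : m ^ 2 * M ≤ 2 * MPQ := by linarith
  have h1 : (sx * a * b) ^ 2 * (m ^ 2 * M) ≤ MPQ * (2 * MPQ) :=
    mul_le_mul key2 s1 (by positivity) hmin0
  have h2 := mul_le_mul key1 key1 (mul_nonneg hκ0 hmin0) hD0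
  have h3 := mul_le_mul_of_nonneg_left h1 (mul_nonneg hκ0 hκ0)
  linarith [h2, h3]

set_option maxHeartbeats 1000000 in
theorem gfun_integrable (α x : ℝ) (hα : α ∈ Set.Ioo 0 π) (hx : x ∈ Set.Ioo 0 π)
    (η : ℝ) (hη0 : 0 ≤ η) (hη1 : η < 1) :
    MeasureTheory.IntegrableOn
      (fun p : ℝ × ℝ => |gfun α x p.1 p.2| ^ (1 + η))
      (Set.Icc (0 : ℝ) (2 * π) ×ˢ Set.Icc (0 : ℝ) (2 * π)) := by
  obtain ⟨hα0, hαπ⟩ := hα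
  obtain ⟨hx0, hxπ⟩ := hx
  have hπ := Real.pi_pos
  set r : ℝ := 1 + η with hrdef
  have hr1 : 1 ≤ r := by simp [hrdef]; linarith
  have hr2 : r < 2 := by simp [hrdef]; linarith
  have hr0 : 0 < r := by linarith
  set e : ℝ := -(r / 2) with hedef
  have he : -1 < e := by simp only [hedef]; linarith
  -- constants
  set m : ℝ := min (Real.sin (α / 2)) (Real.sin (x / 2)) / π with hmdef
  have hsinα : 0 < Real.sin (α / 2) := Real.sin_pos_of_pos_of_lt_pi (by linarith) (by linarith)
  have hsinx : 0 < Real.sin (x / 2) := Real.sin_pos_of_pos_of_lt_pi (by linarith) (by linarith)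
  have hm : 0 < m := by
    apply div_pos _ hπ
    exact lt_min hsinα hsinx
  have hmπ : m * π ≤ 1 := by
    rw [hmdef, div_mul_cancel₀ _ (ne_of_gt hπ)]
    exact le_trans (min_le_left _ _) (Real.sin_le_one _)
  set δ : ℝ := m / 2 * min (π - α) (π - x) with hδdef
  have hδ : 0 < δ := by
    apply mul_pos (by positivity)
    exact lt_min (by linarith) (by linarith)
  have hδhalf : δ ≤ 1 := by
    have h1 : min (π - α) (π - x) ≤ π := le_trans (min_le_left _ _) (by linarith)
    have h2 := mul_le_mul_of_nonneg_left h1 (show (0:ℝ) ≤ m / 2 by positivity)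
    rw [hδdef]
    nlinarith [hmπ]
  set κ : ℝ := δ ^ 4 / 2 with hκdef
  have hκ : 0 < κ := by positivity
  set K2 : ℝ := 2 / (κ ^ 2 * m ^ 2) with hK2def
  have hK2 : 0 < K2 := by positivity
  set K : ℝ := K2 ^ (r / 2) with hKdef
  have hK : 0 < K := Real.rpow_pos_of_pos hK2 _
  -- the dominating function
  set F : ℝ × ℝ → ℝ := fun p =>
    K * (|p.1 - α| ^ e * |p.2 - x| ^ e)
      + K * (|p.1 - (2 * π - α)| ^ e * |p.2 - (2 * π - x)| ^ e) with hFdef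
  have hFint : IntegrableOn F (Set.Icc (0:ℝ) (2*π) ×ˢ Set.Icc (0:ℝ) (2*π)) := by
    rw [IntegrableOn, Measure.volume_eq_prod, ← Measure.prod_restrict]
    apply Integrable.add
    · exact ((gfun_int1d he α 0 (2*π)).mul_prod (gfun_int1d he x 0 (2*π))).const_mul K
    · exact ((gfun_int1d he (2*π-α) 0 (2*π)).mul_prod
        (gfun_int1d he (2*π-x) 0 (2*π))).const_mul K
  -- measurability
  have hmeas : AEStronglyMeasurable (fun p : ℝ × ℝ => |gfun α x p.1 p.2| ^ r)
      ((volume : Measure (ℝ × ℝ)).restrict (Set.Icc (0:ℝ) (2*π) ×ˢ Set.Icc (0:ℝ) (2*π))) := by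
    have hg : Measurable fun p : ℝ × ℝ => gfun α x p.1 p.2 := by
      unfold gfun
      apply Measurable.div <;> fun_prop
    exact (((Real.continuous_rpow_const hr0.le).measurable.comp hg.abs)).aestronglyMeasurable
  -- null set of bad lines
  have hline1 : ∀ c : ℝ, (volume : Measure (ℝ × ℝ)) {p : ℝ × ℝ | p.1 = c} = 0 := by
    intro c
    have : {p : ℝ × ℝ | p.1 = c} = ({c} : Set ℝ) ×ˢ (Set.univ : Set ℝ) := by
      ext p
      simp only [Set.mem_setOf_eq, Set.mem_prod, Set.mem_singleton_iff, Set.mem_univ, and_true]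
    rw [this, Measure.volume_eq_prod, Measure.prod_prod]
    simp
  have hline2 : ∀ c : ℝ, (volume : Measure (ℝ × ℝ)) {p : ℝ × ℝ | p.2 = c} = 0 := by
    intro c
    have : {p : ℝ × ℝ | p.2 = c} = (Set.univ : Set ℝ) ×ˢ ({c} : Set ℝ) := by
      ext p
      simp only [Set.mem_setOf_eq, Set.mem_prod, Set.mem_singleton_iff, Set.mem_univ, true_and]
    rw [this, Measure.volume_eq_prod, Measure.prod_prod]
    simp
  have hZ : ∀ᵐ p : ℝ × ℝ,
      p.1 ≠ α ∧ p.1 ≠ 2 * π - α ∧ p.2 ≠ x ∧ p.2 ≠ 2 * π - x := by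
    have hunion : (volume : Measure (ℝ × ℝ))
        ({p : ℝ × ℝ | p.1 = α} ∪ {p | p.1 = 2*π-α} ∪ {p | p.2 = x} ∪ {p | p.2 = 2*π-x}) = 0 := by
      refine measure_union_null (measure_union_null (measure_union_null ?_ ?_) ?_) ?_ <;>
        first | exact hline1 _ | exact hline2 _
    have := measure_eq_zero_iff_ae_notMem.mp hunion
    filter_upwards [this] with p hp
    simp only [Set.mem_union, Set.mem_setOf_eq, not_or] at hp
    exact ⟨hp.1.1.1, hp.1.1.2, hp.1.2, hp.2⟩
  apply Integrable.mono' hFint hmeas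
  filter_upwards [ae_restrict_mem (measurableSet_Icc.prod measurableSet_Icc),
    ae_restrict_of_ae hZ] with p hp hpZ
  obtain ⟨hs, hu⟩ := hp
  obtain ⟨hne1, hne2, hne3, hne4⟩ := hpZ
  set s : ℝ := p.1
  set u : ℝ := p.2
  -- abbreviations
  set a : ℝ := Real.sin ((s - α) / 2) with hadef
  set b : ℝ := Real.sin ((s + α) / 2) with hbdef
  set c : ℝ := Real.sin ((u - x) / 2) with hcdef
  set d : ℝ := Real.sin ((u + x) / 2) with hddef
  set A1 : ℝ := |s - α| with hA1def
  set A2 : ℝ := |s - (2 * π - α)| with hA2def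
  set B1 : ℝ := |u - x| with hB1def
  set B2 : ℝ := |u - (2 * π - x)| with hB2def
  have hA1 : 0 < A1 := abs_pos.mpr (sub_ne_zero.mpr hne1)
  have hA2 : 0 < A2 := abs_pos.mpr (sub_ne_zero.mpr hne2)
  have hB1 : 0 < B1 := abs_pos.mpr (sub_ne_zero.mpr hne3)
  have hB2 : 0 < B2 := abs_pos.mpr (sub_ne_zero.mpr hne4)
  have hs0 : (0:ℝ) ≤ s := hs.1
  have hs2 : s ≤ 2 * π := hs.2
  have hu0 : (0:ℝ) ≤ u := hu.1
  have hu2 : u ≤ 2 * π := hu.2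
  have hmα : m ≤ Real.sin (α / 2) / π :=
    div_le_div_of_nonneg_right (min_le_left _ _) hπ.le |>.trans_eq rfl
  have hmx : m ≤ Real.sin (x / 2) / π :=
    div_le_div_of_nonneg_right (min_le_right _ _) hπ.le |>.trans_eq rfl
  -- lower bounds on |a|,|b|,|c|,|d|
  have hla : m / 2 * A1 ≤ |a| := by
    have h := gfun_sin_half_lb (t := s - α) hα0 hαπ
      (by rw [abs_le]; constructor <;> linarith)
    have h2 : m / 2 * A1 ≤ Real.sin (α/2) / π * (|s - α| / 2) := by
      rw [hA1def]
      have := mul_le_mul_of_nonneg_right hmα (show (0:ℝ) ≤ |s - α| / 2 by positivity)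
      linarith
    exact h2.trans h
  have hlb : m / 2 * A2 ≤ |b| := by
    have heq : |b| = |Real.sin ((s - (2*π - α)) / 2)| := by
      rw [hbdef]
      have : (s - (2*π - α)) / 2 = (s + α) / 2 - π := by ring
      rw [this, Real.sin_sub_pi, abs_neg]
    have h := gfun_sin_half_lb (t := s - (2*π - α)) hα0 hαπ
      (by rw [abs_le]; constructor <;> linarith)
    have h2 : m / 2 * A2 ≤ Real.sin (α/2) / π * (|s - (2*π-α)| / 2) := by
      rw [hA2def]
      have := mul_le_mul_of_nonneg_right hmα (show (0:ℝ) ≤ |s - (2*π-α)| / 2 by positivity)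
      linarith
    rw [heq]
    exact h2.trans h
  have hlc : m / 2 * B1 ≤ |c| := by
    have h := gfun_sin_half_lb (t := u - x) hx0 hxπ
      (by rw [abs_le]; constructor <;> linarith)
    have h2 : m / 2 * B1 ≤ Real.sin (x/2) / π * (|u - x| / 2) := by
      rw [hB1def]
      have := mul_le_mul_of_nonneg_right hmx (show (0:ℝ) ≤ |u - x| / 2 by positivity)
      linarith
    exact h2.trans h
  have hld : m / 2 * B2 ≤ |d| := by
    have heq : |d| = |Real.sin ((u - (2*π - x)) / 2)| := by
      rw [hddef]
      have : (u - (2*π - x)) / 2 = (u + x) / 2 - π := by ring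
      rw [this, Real.sin_sub_pi, abs_neg]
    have h := gfun_sin_half_lb (t := u - (2*π - x)) hx0 hxπ
      (by rw [abs_le]; constructor <;> linarith)
    have h2 : m / 2 * B2 ≤ Real.sin (x/2) / π * (|u - (2*π-x)| / 2) := by
      rw [hB2def]
      have := mul_le_mul_of_nonneg_right hmx (show (0:ℝ) ≤ |u - (2*π-x)| / 2 by positivity)
      linarith
    rw [heq]
    exact h2.trans h
  have hapos : 0 < |a| := lt_of_lt_of_le (by positivity) hla
  have hbpos : 0 < |b| := lt_of_lt_of_le (by positivity) hlb
  have hcpos : 0 < |c| := lt_of_lt_of_le (by positivity) hlc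
  have hdpos : 0 < |d| := lt_of_lt_of_le (by positivity) hld
  have ha1 : |a| ≤ 1 := abs_le.mpr ⟨Real.neg_one_le_sin _, Real.sin_le_one _⟩
  have hb1 : |b| ≤ 1 := abs_le.mpr ⟨Real.neg_one_le_sin _, Real.sin_le_one _⟩
  have hc1 : |c| ≤ 1 := abs_le.mpr ⟨Real.neg_one_le_sin _, Real.sin_le_one _⟩
  have hd1 : |d| ≤ 1 := abs_le.mpr ⟨Real.neg_one_le_sin _, Real.sin_le_one _⟩
  -- alternative lower bound δ
  have hab : δ ≤ |a| ∨ δ ≤ |b| := by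
    rcases le_or_gt (π - α) A1 with h | h
    · left
      have : δ ≤ m / 2 * A1 := by
        rw [hδdef]
        exact mul_le_mul_of_nonneg_left (le_trans (min_le_left _ _) h) (by positivity)
      exact this.trans hla
    · right
      have hsum : 2 * (π - α) ≤ A1 + A2 := by
        have := abs_sub_abs_le_abs_sub (s - α) (s - (2*π - α))
        have h3 := abs_sub (s - α) (s - (2*π - α))
        have h4 : |(s - α) - (s - (2*π-α))| = 2*π - 2*α := by
          rw [show (s - α) - (s - (2*π-α)) = 2*π - 2*α by ring, abs_of_pos (by linarith)]
        calc 2 * (π - α) = |(s - α) - (s - (2*π-α))| := by rw [h4]; ring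
          _ ≤ |s - α| + |s - (2*π-α)| := abs_sub _ _
      have hA2' : π - α ≤ A2 := by linarith
      have : δ ≤ m / 2 * A2 := by
        rw [hδdef]
        exact mul_le_mul_of_nonneg_left (le_trans (min_le_left _ _) hA2') (by positivity)
      exact this.trans hlb
  have hcd : δ ≤ |c| ∨ δ ≤ |d| := by
    rcases le_or_gt (π - x) B1 with h | h
    · left
      have : δ ≤ m / 2 * B1 := by
        rw [hδdef]
        exact mul_le_mul_of_nonneg_left (le_trans (min_le_right _ _) h) (by positivity)
      exact this.trans hlc
    · right
      have hsum : 2 * (π - x) ≤ B1 + B2 := by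
        have h4 : |(u - x) - (u - (2*π-x))| = 2*π - 2*x := by
          rw [show (u - x) - (u - (2*π-x)) = 2*π - 2*x by ring, abs_of_pos (by linarith)]
        calc 2 * (π - x) = |(u - x) - (u - (2*π-x))| := by rw [h4]; ring
          _ ≤ |u - x| + |u - (2*π-x)| := abs_sub _ _
      have hB2' : π - x ≤ B2 := by linarith
      have : δ ≤ m / 2 * B2 := by
        rw [hδdef]
        exact mul_le_mul_of_nonneg_left (le_trans (min_le_right _ _) hB2') (by positivity)
      exact this.trans hld
  -- apply the core lemma
  have hapos' : a ≠ 0 := abs_pos.mp hapos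
  have hbpos' : b ≠ 0 := abs_pos.mp hbpos
  set D : ℝ := c ^ 2 * b ^ 2 + d ^ 2 * a ^ 2 with hDdef
  set N : ℝ := Real.sin x * a * b with hNdef
  set M : ℝ := min (A1 * B1) (A2 * B2) with hMdef
  have hM0 : 0 < M := lt_min (by positivity) (by positivity)
  have hD : 0 < D := by
    have h1 : 0 < c ^ 2 * b ^ 2 := by
      have hc2 : 0 < c ^ 2 := by rw [← sq_abs]; positivity
      have hb2 : 0 < b ^ 2 := by rw [← sq_abs]; positivity
      positivity
    have h2 : 0 ≤ d ^ 2 * a ^ 2 := by positivity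
    rw [hDdef]; linarith
  have hsinx' : 0 < Real.sin x := Real.sin_pos_of_pos_of_lt_pi hx0 hxπ
  have hcore := gfun_core hδ hδhalf hm ha1 hb1 hc1 hd1 hab hcd
    hA1.le hA2.le hB1.le hB2.le hla hlb hlc hld hsinx'.le (Real.sin_le_one x)
  have hg2 : (gfun α x s u) ^ 2 ≤ K2 / M := by
    have hgeq : gfun α x s u = N / D := by
      rw [gfun, hNdef, hDdef, hadef, hbdef, hcdef, hddef]
    rw [hgeq, div_pow, div_le_div_iff₀ (by positivity) hM0, hK2def, div_mul_eq_mul_div,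
      le_div_iff₀ (by positivity)]
    -- goal : N^2 * M * (κ^2 * m^2) ≤ 2 * D^2
    have hcore' : κ ^ 2 * m ^ 2 * (N ^ 2 * M) ≤ 2 * D ^ 2 := by
      rw [hκdef, hNdef, hMdef, hDdef]
      exact hcore
    linarith [hcore']
  -- convert to rpow bound
  have hnorm : ‖|gfun α x s u| ^ r‖ = |gfun α x s u| ^ r := by
    rw [Real.norm_eq_abs, abs_of_nonneg (Real.rpow_nonneg (abs_nonneg _) _)]
  rw [hnorm]
  have habs2 : |gfun α x s u| ^ r = ((gfun α x s u) ^ 2) ^ (r / 2) := by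
    rw [← sq_abs, ← Real.rpow_natCast |gfun α x s u| 2,
      ← Real.rpow_mul (abs_nonneg _)]
    congr 1
    push_cast
    ring
  rw [habs2]
  have hstep : ((gfun α x s u) ^ 2) ^ (r / 2) ≤ (K2 / M) ^ (r / 2) :=
    Real.rpow_le_rpow (sq_nonneg _) hg2 (by linarith)
  have hKM : (K2 / M) ^ (r / 2) = K * M ^ e := by
    rw [Real.div_rpow hK2.le hM0.le, hKdef, hedef, Real.rpow_neg hM0.le, div_eq_mul_inv]
  rw [hKM] at hstep
  refine hstep.trans ?_
  -- M^e ≤ (A1 B1)^e + (A2 B2)^e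
  have hMe : M ^ e ≤ (A1 * B1) ^ e + (A2 * B2) ^ e := by
    rcases min_cases (A1 * B1) (A2 * B2) with ⟨hmeq, _⟩ | ⟨hmeq, _⟩
    · rw [hMdef, hmeq]
      have : 0 ≤ (A2 * B2) ^ e := Real.rpow_nonneg (by positivity) _
      linarith
    · rw [hMdef, hmeq]
      have : 0 ≤ (A1 * B1) ^ e := Real.rpow_nonneg (by positivity) _
      linarith
  have hrw1 : (A1 * B1) ^ e = A1 ^ e * B1 ^ e := Real.mul_rpow hA1.le hB1.le
  have hrw2 : (A2 * B2) ^ e = A2 ^ e * B2 ^ e := Real.mul_rpow hA2.le hB2.le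
  simp only [hFdef]
  calc K * M ^ e ≤ K * ((A1 * B1) ^ e + (A2 * B2) ^ e) :=
        mul_le_mul_of_nonneg_left hMe hK.le
    _ = K * (A1 ^ e * B1 ^ e) + K * (A2 ^ e * B2 ^ e) := by rw [hrw1, hrw2]; ring
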